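/- Let E be a nilpotent, torsion-free, non-abelian group. Then E contains elements a, b, c with c = [a,b] (the commutator aba⁻¹b⁻¹), a·c = c·a, b·c = c·b, and a, b, c all of infinite order; that is, E contains a subgroup isomorphic to the discrete Heisenberg group. -/

import Mathlib

/-- A predicate to express that a group is torsion-free (the old Mathlib definition). -/
def Monoid.IsTorsionFree (G : Type*) [Monoid G] : Prop :=
  ∀ g : G, g ≠ 1 → ¬IsOfFinOrder g

open scoped commutatorElement

lemma exists_noncomm_of_commutator_ne_bot {G : Type*} [Group G] (K : Subgroup G)
    (h : (⁅K, (⊤ : Subgroup G)⁆ : Subgroup G) ≠ ⊥) :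
    ∃ x ∈ K, ∃ y : G, ⁅x, y⁆ ≠ 1 := by
  by_contra hc
  push_neg at hc
  apply h
  rw [eq_bot_iff]
  rw [Subgroup.commutator_le]
  intro x hx y _
  rw [Subgroup.mem_bot]
  exact hc x hx y

/-- A nilpotent, torsion-free, non-abelian group contains elements `a, b, c` with
`c = [a,b]`, `a` and `b` commuting with `c`, and `a`, `b`, `c` of infinite order;
i.e. it contains a copy of the discrete Heisenberg group. -/
theorem nilpotent_torsionFree_nonabelian_contains_heisenberg
    (E : Type*) [Group E] [Group.IsNilpotent E]
    (htf : Monoid.IsTorsionFree E)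
    (hna : ¬ ∀ a b : E, a * b = b * a) :
    ∃ a b c : E, c = a * b * a⁻¹ * b⁻¹ ∧ a * c = c * a ∧ b * c = c * b ∧
      ¬ IsOfFinOrder a ∧ ¬ IsOfFinOrder b ∧ ¬ IsOfFinOrder c := by
  have hex : ∃ n, (⊤ : Subgroup E).lowerCentralSeries n = ⊥ :=
    nilpotent_iff_lowerCentralSeries.mp inferInstance
  classical
  let k := Nat.find hex
  have hk : (⊤ : Subgroup E).lowerCentralSeries k = ⊥ := Nat.find_spec hex
  -- k ≥ 2
  have h1 : (⊤ : Subgroup E).lowerCentralSeries 1 ≠ ⊥ := by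
    intro h
    apply hna
    intro a b
    have : ⁅a, b⁆ ∈ (⊤ : Subgroup E).lowerCentralSeries 1 := by
      rw [lowerCentralSeries_succ]
      exact Subgroup.commutator_mem_commutator (by simp [lowerCentralSeries_zero])
        (Subgroup.mem_top b)
    rw [h, Subgroup.mem_bot] at this
    have := commutatorElement_eq_one_iff_mul_comm.mp this
    exact this
  have hk2 : 2 ≤ k := by
    by_contra h
    push_neg at h
    interval_cases k
    · exact h1 (by
        have h0 : (⊤ : Subgroup E).lowerCentralSeries 0 = ⊥ := hk
        rw [eq_bot_iff, ← h0]
        exact lowerCentralSeries_antitone _ (by norm_num))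
    · exact h1 hk
  have hpred : (⊤ : Subgroup E).lowerCentralSeries (k - 1) ≠ ⊥ :=
    Nat.find_min hex (by omega)
  have hstep : (⊤ : Subgroup E).lowerCentralSeries (k - 1) = ⁅(⊤ : Subgroup E).lowerCentralSeries (k - 2), ⊤⁆ := by
    have : k - 1 = (k - 2) + 1 := by omega
    rw [this, lowerCentralSeries_succ, Subgroup.commutator_def]
  obtain ⟨x, hx, y, hxy⟩ :=
    exists_noncomm_of_commutator_ne_bot ((⊤ : Subgroup E).lowerCentralSeries (k - 2)) (hstep ▸ hpred)
  have hcmem : ⁅x, y⁆ ∈ (⊤ : Subgroup E).lowerCentralSeries (k - 1) := by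
    rw [hstep]
    exact Subgroup.commutator_mem_commutator hx (Subgroup.mem_top y)
  have hcentral : ∀ g : E, ⁅x, y⁆ * g = g * ⁅x, y⁆ := by
    intro g
    have : ⁅⁅x, y⁆, g⁆ ∈ (⊤ : Subgroup E).lowerCentralSeries k := by
      have : k = (k - 1) + 1 := by omega
      rw [this, lowerCentralSeries_succ]
      exact Subgroup.commutator_mem_commutator hcmem (Subgroup.mem_top g)
    rw [hk, Subgroup.mem_bot] at this
    exact (commutatorElement_eq_one_iff_mul_comm.mp this).symm ▸
      (commutatorElement_eq_one_iff_mul_comm.mp this)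
  have hx1 : x ≠ 1 := by rintro rfl; simp [commutatorElement_def] at hxy
  have hy1 : y ≠ 1 := by rintro rfl; simp [commutatorElement_def] at hxy
  refine ⟨x, y, ⁅x, y⁆, rfl, (hcentral x).symm, (hcentral y).symm, htf x hx1, htf y hy1,
    htf ⁅x, y⁆ hxy⟩
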